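/- Let 𝕂 be ℝ or ℂ, r ≥ 1, and let V be a 𝕂-vector space with dim V ≥ r. Then every left ideal 𝔩 ⊆ 𝕂[S_r] (a 𝕂-subspace closed under left multiplication by elements of 𝕂[S_r]) satisfies 𝔩 = span_𝕂 { T_b : T an r-linear map V^r → 𝕂 such that T_{b'} ∈ 𝔩 for all b' ∈ V^r, and b ∈ V^r }. -/

import Mathlib

/-- The group algebra element `T_b = Σ_{p∈S_r} T(v_{p(1)},…,v_{p(r)})·p` induced by an
`r`-linear map `T` and an `r`-tuple `b = (v₁,…,v_r)`. -/
noncomputable def tb {𝕂 : Type*} [RCLike 𝕂] {V : Type*} [AddCommGroup V] [Module 𝕂 V]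
    {r : ℕ} (T : MultilinearMap 𝕂 (fun _ : Fin r => V) 𝕂) (b : Fin r → V) :
    MonoidAlgebra 𝕂 (Equiv.Perm (Fin r)) :=
  ∑ p : Equiv.Perm (Fin r), MonoidAlgebra.single p (T (b ∘ p))

/-- The multilinear map built from coefficients of `x` and linear functionals `f`. -/
noncomputable def auxT {𝕂 : Type*} [RCLike 𝕂] {V : Type*} [AddCommGroup V] [Module 𝕂 V]
    {r : ℕ} (x : MonoidAlgebra 𝕂 (Equiv.Perm (Fin r))) (f : Fin r → V →ₗ[𝕂] 𝕂) :
    MultilinearMap 𝕂 (fun _ : Fin r => V) 𝕂 :=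
  ∑ q : Equiv.Perm (Fin r),
    x.coeff q • (MultilinearMap.mkPiAlgebra 𝕂 (Fin r) 𝕂).compLinearMap (fun i => f (q i))

lemma tb_auxT {𝕂 : Type*} [RCLike 𝕂] {V : Type*} [AddCommGroup V] [Module 𝕂 V]
    {r : ℕ} (x : MonoidAlgebra 𝕂 (Equiv.Perm (Fin r))) (f : Fin r → V →ₗ[𝕂] 𝕂)
    (b' : Fin r → V) :
    tb (auxT x f) b' = ∑ s : Equiv.Perm (Fin r),
      MonoidAlgebra.single s⁻¹ (∏ j, f (s j) (b' j)) * x := by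
  ext p
  have hL : (tb (auxT x f) b').coeff p = (auxT x f) (b' ∘ p) := by
    rw [tb]
    rw [MonoidAlgebra.coeff_sum, Finset.sum_apply']
    simp [MonoidAlgebra.coeff_single, Finsupp.single_apply]
  rw [hL]
  have hT : (auxT x f) (b' ∘ p) = ∑ q : Equiv.Perm (Fin r),
      x.coeff q * ∏ i, f (q i) (b' (p i)) := by
    rw [auxT, MultilinearMap.sum_apply]
    simp [Function.comp]
  rw [hT, MonoidAlgebra.coeff_sum, Finset.sum_apply']
  refine Fintype.sum_equiv (Equiv.mulRight p⁻¹) _ _ fun s => ?_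
  simp only [Equiv.coe_mulRight]
  have h1 : (MonoidAlgebra.single (s * p⁻¹)⁻¹ (∏ j, f ((s * p⁻¹) j) (b' j)) * x).coeff p
      = (∏ j, f ((s * p⁻¹) j) (b' j)) * x.coeff s := by
    simp [MonoidAlgebra.coeff_single_mul_apply, mul_assoc]
  rw [h1]
  rw [show (∏ j, f ((s * p⁻¹) j) (b' j)) = ∏ i, f (s i) (b' (p i)) from by
    simpa [Equiv.Perm.mul_apply] using
      (Equiv.prod_comp p (fun j => f (s (p⁻¹ j)) (b' j))).symm]
  ring

lemma tb_auxT_delta {𝕂 : Type*} [RCLike 𝕂] {V : Type*} [AddCommGroup V] [Module 𝕂 V]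
    {r : ℕ} (x : MonoidAlgebra 𝕂 (Equiv.Perm (Fin r))) (f : Fin r → V →ₗ[𝕂] 𝕂)
    (e : Fin r → V) (hfe : ∀ i j, f i (e j) = if i = j then 1 else 0) :
    tb (auxT x f) e = x := by
  rw [tb_auxT]
  have h2 : ∀ s : Equiv.Perm (Fin r),
      (∏ j, f (s j) (e j)) = if s = 1 then (1 : 𝕂) else 0 := by
    intro s
    simp only [hfe]
    rw [Finset.prod_boole]
    congr 1
    simp only [eq_iff_iff]
    constructor
    · intro h; ext j; simp [h j (Finset.mem_univ j)]
    · intro h j _; rw [h]; rfl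
  rw [Finset.sum_eq_single 1]
  · rw [h2 1, if_pos rfl, inv_one, ← MonoidAlgebra.one_def, one_mul]
  · intro s _ hs
    rw [h2, if_neg hs]
    simp
  · intro h; exact absurd (Finset.mem_univ 1) h

/-- If `dim V ≥ r`, every left ideal `𝔩 ⊆ 𝕂[S_r]` is the span of the elements `T_b` of the
`r`-linear maps `T` all of whose `T_{b'}` lie in `𝔩`. -/
theorem stmt10 {𝕂 : Type*} [RCLike 𝕂] {V : Type*} [AddCommGroup V] [Module 𝕂 V]
    {r : ℕ} (hr : 1 ≤ r) (hdim : (r : Cardinal) ≤ Module.rank 𝕂 V)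
    (𝔩 : Submodule 𝕂 (MonoidAlgebra 𝕂 (Equiv.Perm (Fin r))))
    (hideal : ∀ x ∈ 𝔩, ∀ y : MonoidAlgebra 𝕂 (Equiv.Perm (Fin r)), y * x ∈ 𝔩) :
    𝔩 = Submodule.span 𝕂
      {x : MonoidAlgebra 𝕂 (Equiv.Perm (Fin r)) |
        ∃ (T : MultilinearMap 𝕂 (fun _ : Fin r => V) 𝕂) (b : Fin r → V),
          (∀ b' : Fin r → V, tb T b' ∈ 𝔩) ∧ x = tb T b} := by
  obtain ⟨t, htcard, htli⟩ := le_rank_iff_exists_linearIndependent_finset.mp hdim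
  let g : Fin r → (t : Set V) := fun i => t.equivFin.symm (Fin.cast htcard.symm i)
  have hginj : Function.Injective g := by
    intro i j hij
    have h := t.equivFin.symm.injective hij
    have h2 : (Fin.cast htcard.symm i).val = (Fin.cast htcard.symm j).val := congrArg Fin.val h
    simp only [Fin.coe_cast] at h2
    exact Fin.ext h2
  let ee : Fin r → V := fun i => (g i : V)
  have heinj : ∀ a b : Fin r, ee a = ee b → a = b := fun a b h =>
    hginj (Subtype.ext h)
  have htli' : LinearIndepOn 𝕂 id (t : Set V) := htli
  have hmem : ∀ i, ee i ∈ htli'.extend (Set.subset_univ (t : Set V)) := fun i =>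
    htli'.subset_extend _ (g i).2
  let B := Module.Basis.extend htli'
  let f : Fin r → V →ₗ[𝕂] 𝕂 := fun i => B.coord ⟨ee i, hmem i⟩
  have hfe : ∀ i j, f i (ee j) = if i = j then 1 else 0 := by
    intro i j
    have hBj : ee j = B ⟨ee j, hmem j⟩ := by
      exact (Module.Basis.extend_apply_self htli' ⟨ee j, hmem j⟩).symm
    simp only [f, Module.Basis.coord_apply]
    have hrepr : B.repr (ee j) = B.repr (B ⟨ee j, hmem j⟩) := congrArg _ hBj
    by_cases hij : i = j
    · subst hij
      rw [hrepr, Module.Basis.repr_self, if_pos rfl]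
      exact Finsupp.single_eq_same
    · rw [hrepr, Module.Basis.repr_self, if_neg hij]
      refine Finsupp.single_eq_of_ne fun hc => hij ?_
      have hc' : ee j = ee i := by simpa [Subtype.mk.injEq] using hc.symm
      exact (heinj j i hc').symm
  apply le_antisymm
  · intro x hx
    refine Submodule.subset_span ⟨auxT x f, ee, ?_, (tb_auxT_delta x f ee hfe).symm⟩
    intro b'
    rw [tb_auxT]
    exact Submodule.sum_mem _ fun s _ => hideal x hx _
  · rw [Submodule.span_le]
    rintro _ ⟨T, b, hT, rfl⟩
    exact hT b
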